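/- For every real p with 0 < p ≤ 1, the function z ↦ (1/p)·exp(z^p)·z^{2-p} is convex on [0,∞). -/

import Mathlib

/-- For 0 < p ≤ 1, the function z ↦ (1/p)·exp(z^p)·z^{2-p} is convex on [0,∞). -/
theorem stmt2 (p : ℝ) (hp0 : 0 < p) (hp1 : p ≤ 1) :
    ConvexOn ℝ (Set.Ici 0) (fun z : ℝ => 1 / p * Real.exp (z ^ p) * z ^ (2 - p)) := by
  set f : ℝ → ℝ := fun z : ℝ => 1 / p * Real.exp (z ^ p) * z ^ (2 - p) with hf
  set g : ℝ → ℝ := fun z : ℝ => Real.exp (z ^ p) * (z + (2 - p) / p * z ^ (1 - p)) with hg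
  have hc : (0:ℝ) ≤ (2 - p) / p := div_nonneg (by linarith) hp0.le
  -- derivative on (0, ∞)
  have hder : ∀ x ∈ Set.Ioi (0:ℝ), HasDerivAt f (g x) x := by
    intro x hx
    have hx0 : (0:ℝ) < x := hx
    have h1 : HasDerivAt (fun z : ℝ => z ^ p) (p * x ^ (p - 1)) x :=
      Real.hasDerivAt_rpow_const (Or.inl hx0.ne')
    have h3 : HasDerivAt (fun z : ℝ => z ^ (2 - p)) ((2 - p) * x ^ (2 - p - 1)) x :=
      Real.hasDerivAt_rpow_const (Or.inl hx0.ne')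
    have h4 : HasDerivAt (fun y => 1 / p * (Real.exp (y ^ p) * y ^ (2 - p)))
        (1 / p * (Real.exp (x ^ p) * (p * x ^ (p - 1)) * x ^ (2 - p)
          + Real.exp (x ^ p) * ((2 - p) * x ^ (2 - p - 1)))) x :=
      ((h1.exp.fun_mul h3).const_mul (1 / p))
    have hxp : x ^ (p - 1) * x ^ (2 - p) = x := by
      rw [← Real.rpow_add hx0]
      norm_num
    convert h4 using 1
    · funext z
      simp only [hf]
      ring
    · have h21 : 2 - p - 1 = 1 - p := by ring
      rw [h21]
      field_simp [hg]
      have key : Real.exp (x ^ p) * (p * x ^ (p - 1)) * x ^ (2 - p)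
          = Real.exp (x ^ p) * (x * p) := by
        rw [mul_assoc (Real.exp (x ^ p)), mul_assoc p, hxp]
        ring
      have hpp : (2 - p) / p * p = 2 - p := div_mul_cancel₀ _ hp0.ne'
      simp only [hg]
      linear_combination (Real.exp (x ^ p) * x ^ (1 - p)) * hpp - key
  have hderiv : ∀ x ∈ Set.Ioi (0:ℝ), deriv f x = g x := fun x hx => (hder x hx).deriv
  have hmono : MonotoneOn (deriv f) (interior (Set.Ici (0:ℝ))) := by
    rw [interior_Ici]
    intro a ha b hb hab
    rw [hderiv a ha, hderiv b hb]
    have ha0 : (0:ℝ) < a := ha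
    have hb0 : (0:ℝ) < b := hb
    have hrp : a ^ p ≤ b ^ p := Real.rpow_le_rpow ha0.le hab hp0.le
    have hr1p : a ^ (1 - p) ≤ b ^ (1 - p) := Real.rpow_le_rpow ha0.le hab (by linarith)
    have hA : a + (2 - p) / p * a ^ (1 - p) ≤ b + (2 - p) / p * b ^ (1 - p) := by
      have := mul_le_mul_of_nonneg_left hr1p hc
      linarith
    have hAnn : (0:ℝ) ≤ a + (2 - p) / p * a ^ (1 - p) := by
      have : (0:ℝ) ≤ (2 - p) / p * a ^ (1 - p) :=
        mul_nonneg hc (Real.rpow_nonneg ha0.le _)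
      linarith
    exact mul_le_mul (Real.exp_le_exp.mpr hrp) hA hAnn (Real.exp_pos _).le
  have hcont : ContinuousOn f (Set.Ici (0:ℝ)) := by
    intro x hx
    have h1 : ContinuousAt (fun z : ℝ => z ^ p) x :=
      Real.continuousAt_rpow_const x p (Or.inr hp0.le)
    have h2 : ContinuousAt (fun z : ℝ => z ^ (2 - p)) x :=
      Real.continuousAt_rpow_const x (2 - p) (Or.inr (by linarith))
    exact ((continuousAt_const.fun_mul h1.rexp).fun_mul h2).continuousWithinAt
  have hdiff : DifferentiableOn ℝ f (interior (Set.Ici (0:ℝ))) := by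
    rw [interior_Ici]
    intro x hx
    exact (hder x hx).differentiableAt.differentiableWithinAt
  exact MonotoneOn.convexOn_of_deriv (convex_Ici 0) hcont hdiff hmono
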